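/- Let κ > 0, Γ_c > 0, Γ_g > 0, δ̃ > 0, ε_g ≥ 0, 0 < p < 1, 0 < q < 1 < φ_π, and g > 0 be real numbers. Set Γ_k := (1 + Γ_g)·ε_g, D_q := 1 − q + κΓ_c(φ_π − q), k := δ̃·g/(1 − p), c₂ := κ(φ_π − q)Γ_k·k / D_q, and π₂ := −κ(1 − q)Γ_k·k / D_q. Then the unique pair (c₁, π₁) satisfying the normal-times short-run system c₁ = p·c₁ + (1−p)·c₂ − (φ_π·π₁ − p·π₁ − (1−p)·π₂) and π₁ = κ(Γ_c·c₁ + Γ_g·g) satisfies π₁ > 0. -/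

import Mathlib

theorem normal_times_inflation_positive
    (κ Γc Γg δt εg p q φ g : ℝ)
    (hκ : 0 < κ) (hΓc : 0 < Γc) (hΓg : 0 < Γg) (hδt : 0 < δt) (hεg : 0 ≤ εg)
    (hp0 : 0 < p) (hp1 : p < 1) (hq0 : 0 < q) (hq1 : q < 1) (hφ : 1 < φ)
    (hg : 0 < g)
    (Γk Dq k c₂ π₂ : ℝ)
    (hΓk : Γk = (1 + Γg) * εg)
    (hDq : Dq = 1 - q + κ * Γc * (φ - q))
    (hk : k = δt * g / (1 - p))
    (hc₂ : c₂ = κ * (φ - q) * Γk * k / Dq)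
    (hπ₂ : π₂ = -(κ * (1 - q) * Γk * k) / Dq) :
    ∀ c₁ π₁ : ℝ,
      (c₁ = p * c₁ + (1 - p) * c₂ - (φ * π₁ - p * π₁ - (1 - p) * π₂) ∧
       π₁ = κ * (Γc * c₁ + Γg * g)) →
      0 < π₁ := by
  intro c₁ π₁ ⟨h1, h2⟩
  have hDqpos : 0 < Dq := by rw [hDq]; nlinarith [mul_pos (mul_pos hκ hΓc) (show (0:ℝ) < φ - q by linarith)]
  have hkpos : 0 < k := by rw [hk]; exact div_pos (by positivity) (by linarith)
  have hΓknn : 0 ≤ Γk := by rw [hΓk]; positivity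
  have hsum : 0 ≤ c₂ + π₂ := by
    rw [hc₂, hπ₂, ← add_div]
    apply div_nonneg _ hDqpos.le
    nlinarith [mul_nonneg (mul_nonneg hκ.le hΓknn) hkpos.le]
  have key : π₁ * ((1 - p) + κ * Γc * (φ - p)) =
      κ * Γc * (1 - p) * (c₂ + π₂) + κ * Γg * g * (1 - p) := by
    linear_combination (1 - p) * h2 + κ * Γc * h1
  have hden : 0 < (1 - p) + κ * Γc * (φ - p) := by nlinarith [mul_pos (mul_pos hκ hΓc) (show (0:ℝ) < φ - p by linarith)]
  nlinarith [mul_nonneg (mul_nonneg (mul_nonneg hκ.le hΓc.le) (by linarith : (0:ℝ) ≤ 1 - p)) hsum,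
    mul_pos (mul_pos (mul_pos hκ hΓg) hg) (by linarith : (0:ℝ) < 1 - p)]
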